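/- In the finite-horizon discrete-time risky-safe arm problem with a single user running ε-Thompson sampling (ε ∈ [0,1)), the expected cumulative discounted reward K(p), as a function of the prior probability p ∈ (0,1) that the risky arm is high, satisfies E[K(p')] > K(p), where p' is the random posterior obtained from p after observing one additional noisy sample of the risky arm. -/

import Mathlib

open MeasureTheory Real

/-- Unnormalized Gaussian likelihood of observing `x` when the mean is `m`. -/
noncomputable def lik (σ m x : ℝ) : ℝ := Real.exp (-(x - m) ^ 2 / (2 * σ ^ 2))

/-- Bayesian posterior that the risky arm is high after observing `x` from prior `p`. -/
noncomputable def post (σ h l p x : ℝ) : ℝ :=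
  p * lik σ h x / (p * lik σ h x + (1 - p) * lik σ l x)

/-- Marginal density of an observation of the risky arm under prior `p`. -/
noncomputable def obsDens (σ h l p x : ℝ) : ℝ :=
  (p * lik σ h x + (1 - p) * lik σ l x) / Real.sqrt (2 * Real.pi * σ ^ 2)

/-- Risky-arm pull probability of ε-Thompson sampling at posterior `q`. -/
noncomputable def fTS (ε q : ℝ) : ℝ := ε + (1 - ε) * q

/-- Expected cumulative `β`-discounted reward of a single user running ε-Thompson
sampling for `t` remaining steps, as a function of the posterior `p`:
at each step the risky arm (mean `p*h+(1-p)*l`) is pulled with probability `fTS ε p`,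
in which case the posterior is updated with one noisy risky-arm sample. -/
noncomputable def Kval (σ h l s β ε : ℝ) : ℕ → ℝ → ℝ
  | 0, _ => 0
  | t + 1, p =>
      fTS ε p * (p * h + (1 - p) * l) + (1 - fTS ε p) * s +
        β * (fTS ε p * (∫ x, Kval σ h l s β ε t (post σ h l p x) * obsDens σ h l p x) +
          (1 - fTS ε p) * Kval σ h l s β ε t p)

namespace VOI

lemma lik_pos (σ m x : ℝ) : 0 < lik σ m x := Real.exp_pos _

lemma lik_le_one (hσ : 0 < σ) (m x : ℝ) : lik σ m x ≤ 1 := by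
  unfold lik
  rw [Real.exp_le_one_iff]
  apply div_nonpos_of_nonpos_of_nonneg
  · nlinarith [sq_nonneg (x - m)]
  · positivity

lemma continuous_lik (σ m : ℝ) : Continuous (lik σ m) := by
  unfold lik; fun_prop

lemma sqrt_pos' (hσ : 0 < σ) : 0 < Real.sqrt (2 * Real.pi * σ ^ 2) := by
  apply Real.sqrt_pos.2; positivity

lemma integrable_lik (hσ : 0 < σ) (m : ℝ) : Integrable (lik σ m) := by
  have hb : (0:ℝ) < (2 * σ ^ 2)⁻¹ := by positivity
  have h1 : Integrable (fun x : ℝ => Real.exp (-(2 * σ ^ 2)⁻¹ * x ^ 2)) :=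
    integrable_exp_neg_mul_sq hb
  have h2 := h1.comp_sub_right m
  apply h2.congr
  filter_upwards with x
  unfold lik
  congr 1
  field_simp
lemma integral_lik (hσ : 0 < σ) (m : ℝ) :
    ∫ x, lik σ m x = Real.sqrt (2 * Real.pi * σ ^ 2) := by
  have hb : (0:ℝ) < (2 * σ ^ 2)⁻¹ := by positivity
  have h0 : ∀ x : ℝ, lik σ m x = Real.exp (-(2 * σ ^ 2)⁻¹ * (x - m) ^ 2) := by
    intro x; unfold lik; congr 1; field_simp
  calc ∫ x, lik σ m x = ∫ x, Real.exp (-(2 * σ ^ 2)⁻¹ * (x - m) ^ 2) := by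
        simp_rw [h0]
    _ = ∫ y, Real.exp (-(2 * σ ^ 2)⁻¹ * y ^ 2) :=
        integral_sub_right_eq_self (μ := volume) (fun y => Real.exp (-(2 * σ ^ 2)⁻¹ * y ^ 2)) m
    _ = Real.sqrt (Real.pi / (2 * σ ^ 2)⁻¹) := integral_gaussian _
    _ = Real.sqrt (2 * Real.pi * σ ^ 2) := by congr 1; field_simp

variable {σ h l s β ε p : ℝ}

lemma dnm_pos (hσ : 0 < σ) (hp : p ∈ Set.Ioo (0:ℝ) 1) (x : ℝ) :
    0 < p * lik σ h x + (1 - p) * lik σ l x := by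
  obtain ⟨hp0, hp1⟩ := hp
  have := lik_pos σ h x; have := lik_pos σ l x
  nlinarith

lemma post_mem (hσ : 0 < σ) (hp : p ∈ Set.Ioo (0:ℝ) 1) (x : ℝ) :
    post σ h l p x ∈ Set.Ioo (0:ℝ) 1 := by
  obtain ⟨hp0, hp1⟩ := hp
  have h1 := lik_pos σ h x; have h2 := lik_pos σ l x
  have hd := dnm_pos hσ ⟨hp0, hp1⟩ (h := h) (l := l) x
  constructor
  · exact div_pos (by positivity) hd
  · unfold post; rw [div_lt_one hd]; nlinarith

lemma obsDens_nonneg (hσ : 0 < σ) (hp : p ∈ Set.Ioo (0:ℝ) 1) (x : ℝ) :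
    0 ≤ obsDens σ h l p x :=
  le_of_lt (div_pos (dnm_pos hσ hp x) (sqrt_pos' hσ))

lemma continuous_post (hσ : 0 < σ) (hp : p ∈ Set.Ioo (0:ℝ) 1) :
    Continuous (fun x => post σ h l p x) := by
  unfold post
  exact ((continuous_const.mul (continuous_lik σ h)).div
    ((continuous_const.mul (continuous_lik σ h)).add
      (continuous_const.mul (continuous_lik σ l)))
    (fun x => ne_of_gt (dnm_pos hσ hp x)))

lemma continuous_obsDens (σ h l p : ℝ) : Continuous (fun x => obsDens σ h l p x) := by
  unfold obsDens
  exact ((continuous_const.mul (continuous_lik σ h)).add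
      (continuous_const.mul (continuous_lik σ l))).div_const _

lemma integrable_obsDens (hσ : 0 < σ) (p : ℝ) :
    Integrable (fun x => obsDens σ h l p x) := by
  unfold obsDens
  exact (((integrable_lik hσ h).const_mul p).add
    ((integrable_lik hσ l).const_mul (1 - p))).div_const _

lemma integral_obsDens (hσ : 0 < σ) (p : ℝ) :
    ∫ x, obsDens σ h l p x = 1 := by
  unfold obsDens
  rw [integral_div]
  rw [integral_add ((integrable_lik hσ h).const_mul p) ((integrable_lik hσ l).const_mul (1 - p))]
  rw [integral_const_mul, integral_const_mul, integral_lik hσ, integral_lik hσ]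
  field_simp
  ring

lemma post_mul_obsDens (hσ : 0 < σ) (hp : p ∈ Set.Ioo (0:ℝ) 1) (x : ℝ) :
    post σ h l p x * obsDens σ h l p x
      = p * lik σ h x / Real.sqrt (2 * Real.pi * σ ^ 2) := by
  have hd := ne_of_gt (dnm_pos (h := h) (l := l) hσ hp x)
  unfold post obsDens
  field_simp

lemma integrable_post_mul (hσ : 0 < σ) (hp : p ∈ Set.Ioo (0:ℝ) 1) :
    Integrable (fun x => post σ h l p x * obsDens σ h l p x) := by
  have : ∀ x, post σ h l p x * obsDens σ h l p x
      = p * lik σ h x / Real.sqrt (2 * Real.pi * σ ^ 2) := post_mul_obsDens hσ hp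
  simp_rw [this]
  exact ((integrable_lik hσ h).const_mul p).div_const _

lemma integral_post_mul (hσ : 0 < σ) (hp : p ∈ Set.Ioo (0:ℝ) 1) :
    ∫ x, post σ h l p x * obsDens σ h l p x = p := by
  simp_rw [post_mul_obsDens hσ hp]
  rw [integral_div, integral_const_mul, integral_lik hσ]
  field_simp

/-- Generic integrability of `φ(post) * obsDens` for `φ` bounded on `(0,1)` and
continuous there. -/
lemma integrable_comp (hσ : 0 < σ) (hp : p ∈ Set.Ioo (0:ℝ) 1)
    {φ : ℝ → ℝ} (hφc : ContinuousOn φ (Set.Ioo 0 1)) {C : ℝ}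
    (hφb : ∀ q ∈ Set.Ioo (0:ℝ) 1, |φ q| ≤ C) :
    Integrable (fun x => φ (post σ h l p x) * obsDens σ h l p x) := by
  apply (integrable_obsDens hσ p).bdd_mul (c := C)
  · exact (hφc.comp_continuous (continuous_post hσ hp) (post_mem hσ hp)).aestronglyMeasurable
  · exact Filter.Eventually.of_forall (fun x => by
      rw [Real.norm_eq_abs]; exact hφb _ (post_mem hσ hp x))

lemma norm_integral_comp_le (hσ : 0 < σ) (hp : p ∈ Set.Ioo (0:ℝ) 1)
    {φ : ℝ → ℝ} {C : ℝ}
    (hφb : ∀ q ∈ Set.Ioo (0:ℝ) 1, |φ q| ≤ C) :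
    |∫ x, φ (post σ h l p x) * obsDens σ h l p x| ≤ C := by
  have hb : ∀ x, ‖φ (post σ h l p x) * obsDens σ h l p x‖ ≤ C * obsDens σ h l p x := by
    intro x
    rw [Real.norm_eq_abs, abs_mul, abs_of_nonneg (obsDens_nonneg hσ hp x)]
    exact mul_le_mul_of_nonneg_right (hφb _ (post_mem hσ hp x)) (obsDens_nonneg hσ hp x)
  have := norm_integral_le_of_norm_le ((integrable_obsDens hσ p).const_mul C)
    (Filter.Eventually.of_forall hb)
  rw [Real.norm_eq_abs] at this
  calc |∫ x, φ (post σ h l p x) * obsDens σ h l p x| ≤ ∫ x, C * obsDens σ h l p x := this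
    _ = C := by rw [integral_const_mul, integral_obsDens hσ]; ring

lemma fTS_mem (hε0 : 0 ≤ ε) (hε1 : ε < 1) {q : ℝ} (hq : q ∈ Set.Ioo (0:ℝ) 1) :
    fTS ε q ∈ Set.Icc (0:ℝ) 1 := by
  obtain ⟨hq0, hq1⟩ := hq
  unfold fTS
  constructor <;> nlinarith

lemma integrable_sq_dev (hσ : 0 < σ) (hp : p ∈ Set.Ioo (0:ℝ) 1) :
    Integrable (fun x => (post σ h l p x - p) ^ 2 * obsDens σ h l p x) :=
  integrable_comp hσ hp (φ := fun q => (q - p) ^ 2)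
    (by fun_prop) (C := 4) (fun q hq => by
      obtain ⟨h0, h1⟩ := hq; obtain ⟨g0, g1⟩ := hp
      rw [abs_of_nonneg (sq_nonneg _)]
      show (q - p) ^ 2 ≤ 4
      nlinarith [mul_pos (by linarith : (0:ℝ) < 1 - q + p) (by linarith : (0:ℝ) < 1 + q - p)])

lemma variance_pos (hσ : 0 < σ) (hlh : l < h) (hp : p ∈ Set.Ioo (0:ℝ) 1) :
    0 < ∫ x, (post σ h l p x - p) ^ 2 * obsDens σ h l p x := by
  have hnn : 0 ≤ fun x => (post σ h l p x - p) ^ 2 * obsDens σ h l p x := by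
    intro x
    exact mul_nonneg (sq_nonneg _) (obsDens_nonneg hσ hp x)
  rw [integral_pos_iff_support_of_nonneg hnn (integrable_sq_dev hσ hp)]
  have hsub : Set.Ioi ((h + l) / 2) ⊆
      Function.support (fun x => (post σ h l p x - p) ^ 2 * obsDens σ h l p x) := by
    intro x hx
    simp only [Function.mem_support]
    have hlik : lik σ l x < lik σ h x := by
      unfold lik
      apply Real.exp_lt_exp.2
      apply div_lt_div_of_pos_right ?_ (by positivity)
      simp only [Set.mem_Ioi] at hx
      nlinarith
    have hd := dnm_pos (h := h) (l := l) hσ hp x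
    have hpost : p < post σ h l p x := by
      unfold post
      rw [lt_div_iff₀ hd]
      obtain ⟨hp0, hp1⟩ := hp
      nlinarith [mul_pos (mul_pos hp0 (by linarith : (0:ℝ) < 1 - p)) (sub_pos.2 hlik)]
    have h1 : (0:ℝ) < (post σ h l p x - p) ^ 2 := pow_pos (sub_pos.2 hpost) 2
    have h2 : 0 < obsDens σ h l p x := div_pos hd (sqrt_pos' hσ)
    positivity
  calc (0:ENNReal) < volume (Set.Ioi ((h + l) / 2)) := by simp [Real.volume_Ioi]
    _ ≤ _ := measure_mono hsub

/-- The one-step-lookahead expectation operator. -/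
noncomputable def Gop (σ h l : ℝ) (K : ℝ → ℝ) (q : ℝ) : ℝ :=
  ∫ x, K (post σ h l q x) * obsDens σ h l q x

/-- Immediate expected reward. -/
noncomputable def Aq (h l s ε q : ℝ) : ℝ :=
  fTS ε q * (q * h + (1 - q) * l) + (1 - fTS ε q) * s

/-- One step of the Bellman-type recursion. -/
noncomputable def KstepF (σ h l s β ε : ℝ) (K : ℝ → ℝ) (q : ℝ) : ℝ :=
  Aq h l s ε q + β * (fTS ε q * Gop σ h l K q + (1 - fTS ε q) * K q)

lemma Kval_zero (σ h l s β ε q : ℝ) : Kval σ h l s β ε 0 q = 0 := rfl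

lemma Kval_succ (σ h l s β ε : ℝ) (t : ℕ) (q : ℝ) :
    Kval σ h l s β ε (t + 1) q = KstepF σ h l s β ε (Kval σ h l s β ε t) q := rfl

lemma Aq_bound (hε0 : 0 ≤ ε) (hε1 : ε < 1) {q : ℝ} (hq : q ∈ Set.Ioo (0:ℝ) 1) :
    |Aq h l s ε q| ≤ |h| + |l| + |s| := by
  obtain ⟨hf0, hf1⟩ := fTS_mem hε0 hε1 hq
  obtain ⟨hq0, hq1⟩ := hq
  have hmid : |q * h + (1 - q) * l| ≤ |h| + |l| := by
    calc |q * h + (1 - q) * l| ≤ |q * h| + |(1 - q) * l| := abs_add_le _ _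
      _ = q * |h| + (1 - q) * |l| := by
          rw [abs_mul, abs_mul, abs_of_nonneg hq0.le, abs_of_nonneg (by linarith : (0:ℝ) ≤ 1 - q)]
      _ ≤ 1 * |h| + 1 * |l| := by
          nlinarith [mul_nonneg (by linarith : (0:ℝ) ≤ 1 - q) (abs_nonneg h),
            mul_nonneg hq0.le (abs_nonneg l)]
      _ = |h| + |l| := by ring
  calc |Aq h l s ε q|
      ≤ |fTS ε q * (q * h + (1 - q) * l)| + |(1 - fTS ε q) * s| := abs_add_le _ _
    _ = fTS ε q * |q * h + (1 - q) * l| + (1 - fTS ε q) * |s| := by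
        rw [abs_mul, abs_mul, abs_of_nonneg hf0, abs_of_nonneg (by linarith : (0:ℝ) ≤ 1 - fTS ε q)]
    _ ≤ 1 * (|h| + |l|) + 1 * |s| := by
        refine add_le_add ?_ ?_
        · nlinarith [mul_nonneg (by linarith : (0:ℝ) ≤ 1 - fTS ε q)
            (abs_nonneg (q * h + (1 - q) * l)), hmid]
        · nlinarith [mul_nonneg hf0 (abs_nonneg s)]
    _ = |h| + |l| + |s| := by ring

/-- Boundedness of the lookahead operator. -/
lemma Gop_bdd (hσ : 0 < σ) {K : ℝ → ℝ} {C : ℝ}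
    (hbd : ∀ q ∈ Set.Ioo (0:ℝ) 1, |K q| ≤ C) {q : ℝ} (hq : q ∈ Set.Ioo (0:ℝ) 1) :
    |Gop σ h l K q| ≤ C :=
  norm_integral_comp_le hσ hq hbd

/-- Continuity of the lookahead operator on `(0,1)`. -/
lemma Gop_cont (hσ : 0 < σ) {K : ℝ → ℝ} {C : ℝ}
    (hKc : ContinuousOn K (Set.Ioo 0 1))
    (hbd : ∀ q ∈ Set.Ioo (0:ℝ) 1, |K q| ≤ C) :
    ContinuousOn (Gop σ h l K) (Set.Ioo 0 1) := by
  have hC0 : 0 ≤ C := le_trans (abs_nonneg _) (hbd (1/2) (by norm_num))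
  intro q₀ hq₀
  apply ContinuousAt.continuousWithinAt
  apply MeasureTheory.continuousAt_of_dominated
    (bound := fun x => C * ((lik σ h x + lik σ l x) / Real.sqrt (2 * Real.pi * σ ^ 2)))
  · filter_upwards [isOpen_Ioo.eventually_mem hq₀] with q hq
    exact ((hKc.comp_continuous (continuous_post hσ hq) (post_mem hσ hq)).mul
      (continuous_obsDens σ h l q)).aestronglyMeasurable
  · filter_upwards [isOpen_Ioo.eventually_mem hq₀] with q hq
    filter_upwards with x
    rw [Real.norm_eq_abs, abs_mul, abs_of_nonneg (obsDens_nonneg hσ hq x)]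
    have h1 : |K (post σ h l q x)| ≤ C := hbd _ (post_mem hσ hq x)
    have h2 : obsDens σ h l q x ≤ (lik σ h x + lik σ l x) / Real.sqrt (2 * Real.pi * σ ^ 2) := by
      unfold obsDens
      apply (div_le_div_iff_of_pos_right (sqrt_pos' hσ)).mpr
      obtain ⟨hq0, hq1⟩ := hq
      nlinarith [lik_pos σ h x, lik_pos σ l x]
    calc |K (post σ h l q x)| * obsDens σ h l q x
        ≤ C * ((lik σ h x + lik σ l x) / Real.sqrt (2 * Real.pi * σ ^ 2)) :=
          mul_le_mul h1 h2 (obsDens_nonneg hσ hq x) hC0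
      _ = C * ((lik σ h x + lik σ l x) / Real.sqrt (2 * Real.pi * σ ^ 2)) := rfl
  · exact (((integrable_lik hσ h).add (integrable_lik hσ l)).div_const _).const_mul C
  · filter_upwards with x
    have hd : q₀ * lik σ h x + (1 - q₀) * lik σ l x ≠ 0 := ne_of_gt (dnm_pos hσ hq₀ x)
    have hpc : ContinuousAt (fun q => post σ h l q x) q₀ := by
      unfold post
      exact ContinuousAt.div (by fun_prop) (by fun_prop) hd
    have hKc' : ContinuousAt K (post σ h l q₀ x) :=
      hKc.continuousAt (isOpen_Ioo.mem_nhds (post_mem hσ hq₀ x))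
    have h2c : ContinuousAt (fun q => obsDens σ h l q x) q₀ := by
      unfold obsDens; fun_prop
    exact ContinuousAt.mul
      (ContinuousAt.comp (f := fun q => post σ h l q x) hKc' hpc) h2c

lemma step_abstract (hσ : 0 < σ) (hβ0 : 0 < β) (hε0 : 0 ≤ ε) (hε1 : ε < 1)
    {K : ℝ → ℝ} {C : ℝ} (hKc : ContinuousOn K (Set.Ioo 0 1))
    (hbd : ∀ q ∈ Set.Ioo (0:ℝ) 1, |K q| ≤ C)
    (hD : ∀ q ∈ Set.Ioo (0:ℝ) 1, K q ≤ Gop σ h l K q)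
    (hp : p ∈ Set.Ioo (0:ℝ) 1) :
    KstepF σ h l s β ε K p
      + ((1 - ε) * (h - l)) * ∫ x, (post σ h l p x - p) ^ 2 * obsDens σ h l p x
      ≤ Gop σ h l (KstepF σ h l s β ε K) p := by
  have hC0 : 0 ≤ C := le_trans (abs_nonneg _) (hbd (1/2) (by norm_num))
  have i0 : Integrable (fun x => obsDens σ h l p x) := integrable_obsDens hσ p
  have i1 : Integrable (fun x => (post σ h l p x - p) * obsDens σ h l p x) :=
    integrable_comp hσ hp (φ := fun q => q - p) (by fun_prop) (C := 2)
      (fun q hq => by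
        rw [abs_sub_comm]
        calc |p - q| ≤ |p| + |q| := abs_sub _ _
          _ ≤ 2 := by
            rw [abs_of_nonneg hp.1.le, abs_of_nonneg hq.1.le]
            linarith [hp.2, hq.2])
  have i2 : Integrable (fun x => (post σ h l p x - p) ^ 2 * obsDens σ h l p x) :=
    integrable_sq_dev hσ hp
  have i3 : Integrable (fun x => K (post σ h l p x) * obsDens σ h l p x) :=
    integrable_comp hσ hp hKc hbd
  have i4 : Integrable (fun x =>
      (fTS ε (post σ h l p x) *
        (Gop σ h l K (post σ h l p x) - K (post σ h l p x))) * obsDens σ h l p x) := by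
    apply integrable_comp hσ hp (φ := fun q => fTS ε q * (Gop σ h l K q - K q))
      (C := 2 * C)
    · exact ((by unfold fTS; fun_prop : Continuous (fTS ε)).continuousOn.mul
        ((Gop_cont hσ hKc hbd).sub hKc))
    · intro q hq
      obtain ⟨hf0, hf1⟩ := fTS_mem hε0 hε1 hq
      rw [abs_mul, abs_of_nonneg hf0]
      calc fTS ε q * |Gop σ h l K q - K q| ≤ 1 * |Gop σ h l K q - K q| := by
            apply mul_le_mul_of_nonneg_right hf1 (abs_nonneg _)
        _ ≤ 1 * (|Gop σ h l K q| + |K q|) := by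
            apply mul_le_mul_of_nonneg_left (abs_sub _ _) zero_le_one
        _ ≤ 2 * C := by
            have := Gop_bdd (h := h) (l := l) hσ hbd hq
            have := hbd q hq
            linarith
  set M : ℝ := ε * (h - l) + (1 - ε) * (l - s) + 2 * ((1 - ε) * (h - l)) * p with hM
  have key : ∀ x, KstepF σ h l s β ε K (post σ h l p x) * obsDens σ h l p x
      = Aq h l s ε p * obsDens σ h l p x
        + (M * ((post σ h l p x - p) * obsDens σ h l p x)
        + (((1 - ε) * (h - l)) * ((post σ h l p x - p) ^ 2 * obsDens σ h l p x)
        + (β * (K (post σ h l p x) * obsDens σ h l p x)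
        + β * ((fTS ε (post σ h l p x) *
            (Gop σ h l K (post σ h l p x) - K (post σ h l p x))) * obsDens σ h l p x)))) := by
    intro x
    rw [hM]
    unfold KstepF Aq fTS
    ring
  have s1 : (∫ x, Aq h l s ε p * obsDens σ h l p x + (M * ((post σ h l p x - p) * obsDens σ h l p x) + (((1 - ε) * (h - l)) * ((post σ h l p x - p) ^ 2 * obsDens σ h l p x) + (β * (K (post σ h l p x) * obsDens σ h l p x) + β * ((fTS ε (post σ h l p x) * (Gop σ h l K (post σ h l p x) - K (post σ h l p x))) * obsDens σ h l p x)))))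
      = (∫ x, Aq h l s ε p * obsDens σ h l p x) + ∫ x, M * ((post σ h l p x - p) * obsDens σ h l p x) + (((1 - ε) * (h - l)) * ((post σ h l p x - p) ^ 2 * obsDens σ h l p x) + (β * (K (post σ h l p x) * obsDens σ h l p x) + β * ((fTS ε (post σ h l p x) * (Gop σ h l K (post σ h l p x) - K (post σ h l p x))) * obsDens σ h l p x))) :=
    integral_add (i0.const_mul _) ((i1.const_mul M).add ((i2.const_mul _).add
      ((i3.const_mul β).add (i4.const_mul β))))
  have s2 : (∫ x, M * ((post σ h l p x - p) * obsDens σ h l p x) + (((1 - ε) * (h - l)) * ((post σ h l p x - p) ^ 2 * obsDens σ h l p x) + (β * (K (post σ h l p x) * obsDens σ h l p x) + β * ((fTS ε (post σ h l p x) * (Gop σ h l K (post σ h l p x) - K (post σ h l p x))) * obsDens σ h l p x))))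
      = (∫ x, M * ((post σ h l p x - p) * obsDens σ h l p x)) + ∫ x, ((1 - ε) * (h - l)) * ((post σ h l p x - p) ^ 2 * obsDens σ h l p x) + (β * (K (post σ h l p x) * obsDens σ h l p x) + β * ((fTS ε (post σ h l p x) * (Gop σ h l K (post σ h l p x) - K (post σ h l p x))) * obsDens σ h l p x)) :=
    integral_add (i1.const_mul M) ((i2.const_mul _).add ((i3.const_mul β).add (i4.const_mul β)))
  have s3 : (∫ x, ((1 - ε) * (h - l)) * ((post σ h l p x - p) ^ 2 * obsDens σ h l p x) + (β * (K (post σ h l p x) * obsDens σ h l p x) + β * ((fTS ε (post σ h l p x) * (Gop σ h l K (post σ h l p x) - K (post σ h l p x))) * obsDens σ h l p x)))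
      = (∫ x, ((1 - ε) * (h - l)) * ((post σ h l p x - p) ^ 2 * obsDens σ h l p x)) + ∫ x, β * (K (post σ h l p x) * obsDens σ h l p x) + β * ((fTS ε (post σ h l p x) * (Gop σ h l K (post σ h l p x) - K (post σ h l p x))) * obsDens σ h l p x) :=
    integral_add (i2.const_mul _) ((i3.const_mul β).add (i4.const_mul β))
  have s4 : (∫ x, β * (K (post σ h l p x) * obsDens σ h l p x) + β * ((fTS ε (post σ h l p x) * (Gop σ h l K (post σ h l p x) - K (post σ h l p x))) * obsDens σ h l p x)) = (∫ x, β * (K (post σ h l p x) * obsDens σ h l p x)) + ∫ x, β * ((fTS ε (post σ h l p x) * (Gop σ h l K (post σ h l p x) - K (post σ h l p x))) * obsDens σ h l p x) :=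
    integral_add (i3.const_mul β) (i4.const_mul β)
  have hsplit : Gop σ h l (KstepF σ h l s β ε K) p
      = (∫ x, Aq h l s ε p * obsDens σ h l p x)
        + ((∫ x, M * ((post σ h l p x - p) * obsDens σ h l p x))
        + ((∫ x, ((1 - ε) * (h - l)) * ((post σ h l p x - p) ^ 2 * obsDens σ h l p x))
        + ((∫ x, β * (K (post σ h l p x) * obsDens σ h l p x))
        + (∫ x, β * ((fTS ε (post σ h l p x) * (Gop σ h l K (post σ h l p x) - K (post σ h l p x))) * obsDens σ h l p x))))) := by
    rw [show Gop σ h l (KstepF σ h l s β ε K) p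
      = ∫ x, KstepF σ h l s β ε K (post σ h l p x) * obsDens σ h l p x from rfl]
    simp_rw [key]
    rw [s1, s2, s3, s4]
  have e1 : ∫ x, Aq h l s ε p * obsDens σ h l p x = Aq h l s ε p := by
    rw [integral_const_mul, integral_obsDens hσ, mul_one]
  have e2 : ∫ x, (post σ h l p x - p) * obsDens σ h l p x = 0 := by
    have hpt : ∀ x, (post σ h l p x - p) * obsDens σ h l p x
        = post σ h l p x * obsDens σ h l p x - p * obsDens σ h l p x := fun x => by ring
    simp_rw [hpt]
    rw [integral_sub (integrable_post_mul hσ hp) (i0.const_mul p),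
      integral_post_mul hσ hp, integral_const_mul, integral_obsDens hσ]
    ring
  have hE : 0 ≤ ∫ x, (fTS ε (post σ h l p x) *
      (Gop σ h l K (post σ h l p x) - K (post σ h l p x))) * obsDens σ h l p x := by
    apply integral_nonneg
    intro x
    have hm := post_mem (h := h) (l := l) hσ hp x
    have hf0 := (fTS_mem hε0 hε1 hm).1
    have hGK := hD _ hm
    exact mul_nonneg (mul_nonneg hf0 (by linarith)) (obsDens_nonneg hσ hp x)
  have eG : ∫ x, K (post σ h l p x) * obsDens σ h l p x = Gop σ h l K p := rfl
  rw [hsplit, e1, integral_const_mul, e2, integral_const_mul, integral_const_mul,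
    integral_const_mul, eG]
  have hVnn : 0 ≤ ∫ x, (post σ h l p x - p) ^ 2 * obsDens σ h l p x :=
    integral_nonneg (fun x => mul_nonneg (sq_nonneg _) (obsDens_nonneg hσ hp x))
  have hGKp := hD p hp
  obtain ⟨hf0, hf1⟩ := fTS_mem hε0 hε1 hp
  unfold KstepF
  nlinarith [mul_nonneg (mul_nonneg hβ0.le (by linarith : (0:ℝ) ≤ 1 - fTS ε p))
      (by linarith : (0:ℝ) ≤ Gop σ h l K p - K p),
    mul_nonneg hβ0.le hE]

lemma master (hσ : 0 < σ) (hlh : l < h) (hβ0 : 0 < β) (hβ1 : β ≤ 1)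
    (hε0 : 0 ≤ ε) (hε1 : ε < 1) : ∀ t : ℕ,
    ContinuousOn (Kval σ h l s β ε t) (Set.Ioo 0 1) ∧
    (∀ q ∈ Set.Ioo (0:ℝ) 1, |Kval σ h l s β ε t q| ≤ (t : ℝ) * (|h| + |l| + |s|)) ∧
    (∀ q ∈ Set.Ioo (0:ℝ) 1, Kval σ h l s β ε t q ≤ Gop σ h l (Kval σ h l s β ε t) q) := by
  intro t
  induction t with
  | zero =>
    have h0 : Kval σ h l s β ε 0 = fun _ => (0:ℝ) := funext (Kval_zero σ h l s β ε)
    refine ⟨h0 ▸ continuousOn_const, ?_, ?_⟩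
    · intro q hq; rw [Kval_zero]; simp
    · intro q hq
      rw [Kval_zero]
      unfold Gop
      simp_rw [Kval_zero, zero_mul, integral_zero]
      exact le_refl 0
  | succ t ih =>
    obtain ⟨hc, hb, hD⟩ := ih
    have hKeq : Kval σ h l s β ε (t + 1) = KstepF σ h l s β ε (Kval σ h l s β ε t) :=
      funext (Kval_succ σ h l s β ε t)
    have cF : Continuous (fun q => fTS ε q) := by unfold fTS; fun_prop
    have cA : Continuous (fun q => Aq h l s ε q) := by unfold Aq fTS; fun_prop
    have hC00 : (0:ℝ) ≤ |h| + |l| + |s| := by positivity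
    have hCt0 : (0:ℝ) ≤ (t : ℝ) * (|h| + |l| + |s|) := by positivity
    refine ⟨?_, ?_, ?_⟩
    · rw [hKeq]
      unfold KstepF
      refine ContinuousOn.add cA.continuousOn ?_
      refine ContinuousOn.mul continuousOn_const ?_
      refine ContinuousOn.add (ContinuousOn.mul cF.continuousOn (Gop_cont hσ hc hb)) ?_
      exact ContinuousOn.mul (continuous_const.sub cF).continuousOn hc
    · intro q hq
      obtain ⟨hf0, hf1⟩ := fTS_mem hε0 hε1 hq
      have h1 := Aq_bound (h := h) (l := l) (s := s) hε0 hε1 hq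
      have h2 := Gop_bdd (h := h) (l := l) hσ hb hq
      have h3 := hb q hq
      have hX : |fTS ε q * Gop σ h l (Kval σ h l s β ε t) q
          + (1 - fTS ε q) * Kval σ h l s β ε t q| ≤ (t : ℝ) * (|h| + |l| + |s|) := by
        rw [abs_le]
        rw [abs_le] at h2 h3
        constructor <;>
          nlinarith [mul_le_mul_of_nonneg_left h2.2 hf0,
            mul_le_mul_of_nonneg_left h2.1 hf0,
            mul_le_mul_of_nonneg_left h3.2 (by linarith : (0:ℝ) ≤ 1 - fTS ε q),
            mul_le_mul_of_nonneg_left h3.1 (by linarith : (0:ℝ) ≤ 1 - fTS ε q)]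
      calc |Kval σ h l s β ε (t + 1) q|
          ≤ |Aq h l s ε q| + |β * (fTS ε q * Gop σ h l (Kval σ h l s β ε t) q
              + (1 - fTS ε q) * Kval σ h l s β ε t q)| := by
            rw [Kval_succ]
            unfold KstepF
            exact abs_add_le _ _
        _ ≤ (|h| + |l| + |s|) + (t : ℝ) * (|h| + |l| + |s|) := by
            refine add_le_add h1 ?_
            rw [abs_mul, abs_of_pos hβ0]
            calc β * |fTS ε q * Gop σ h l (Kval σ h l s β ε t) q
                + (1 - fTS ε q) * Kval σ h l s β ε t q|
                ≤ 1 * ((t : ℝ) * (|h| + |l| + |s|)) := by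
                  apply mul_le_mul hβ1 hX (abs_nonneg _) zero_le_one
              _ = (t : ℝ) * (|h| + |l| + |s|) := one_mul _
        _ = ((t + 1 : ℕ) : ℝ) * (|h| + |l| + |s|) := by push_cast; ring
    · intro q hq
      have hstep := step_abstract (s := s) hσ hβ0 hε0 hε1 hc hb hD hq
      have ha : (0:ℝ) ≤ (1 - ε) * (h - l) := by nlinarith
      have hV : 0 ≤ ∫ x, (post σ h l q x - q) ^ 2 * obsDens σ h l q x :=
        integral_nonneg (fun x => mul_nonneg (sq_nonneg _) (obsDens_nonneg hσ hq x))
      rw [hKeq]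
      nlinarith [mul_nonneg ha hV]

end VOI

/-- one additional observation of the risky arm strictly increases the
expected cumulative discounted reward: `E[K(p')] > K(p)` for every prior `p ∈ (0,1)`
and horizon `T ≥ 1`. -/
theorem value_of_information (σ h l s β ε : ℝ) (hσ : 0 < σ)
    (hls : l < s) (hsh : s < h) (hβ0 : 0 < β) (hβ1 : β ≤ 1)
    (hε0 : 0 ≤ ε) (hε1 : ε < 1)
    (T : ℕ) (hT : 1 ≤ T) (p : ℝ) (hp : p ∈ Set.Ioo (0:ℝ) 1) :
    Kval σ h l s β ε T p <
      ∫ x, Kval σ h l s β ε T (post σ h l p x) * obsDens σ h l p x := by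
  obtain ⟨t, rfl⟩ : ∃ t, T = t + 1 := ⟨T - 1, (Nat.succ_pred_eq_of_pos hT).symm⟩
  obtain ⟨hc, hb, hD⟩ := VOI.master hσ (lt_trans hls hsh) hβ0 hβ1 hε0 hε1 t
  have hstep := VOI.step_abstract (s := s) hσ hβ0 hε0 hε1 hc hb hD hp
  have hV := VOI.variance_pos hσ (lt_trans hls hsh) hp
  have ha : (0:ℝ) < (1 - ε) * (h - l) := by nlinarith
  have hgoal : (∫ x, Kval σ h l s β ε (t + 1) (post σ h l p x) * obsDens σ h l p x)
      = VOI.Gop σ h l (VOI.KstepF σ h l s β ε (Kval σ h l s β ε t)) p := by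
    rw [show Kval σ h l s β ε (t + 1) = VOI.KstepF σ h l s β ε (Kval σ h l s β ε t) from
      funext (VOI.Kval_succ σ h l s β ε t)]
    rfl
  rw [hgoal, VOI.Kval_succ]
  nlinarith [mul_pos ha hV]
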